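/- Let P be a Markov kernel on a measurable space E, let K ⊆ E be measurable, and let Q_K be the sub-kernel Q_K(x,A) := P(x, A ∩ K). Write S_n(x) := (Q_K^n 𝟙)(x), the probability that the chain started at x lies in K at each of the times 1, …, n (S₀ ≡ 1). Let k > 0 and α ∈ (0,1). Suppose g : E → ℝ is bounded measurable with g ≥ 0 everywhere and g(x) ≥ k for all x ∈ K, suppose for every n ≥ 1 there exists x ∈ K with S_{n−1}(x) ≥ α^n, and suppose (w, λ) is a bounded MPE solution for g. Then λ ≥ k + log α. -/

import Mathlib

open MeasureTheory ProbabilityTheory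

/-- `staySeq P K n x = (Q_K^n 𝟙)(x)`, the probability that the chain with kernel `P` started
at `x` lies in `K` at each of the times `1, …, n`, where `Q_K(x,A) = P(x, A ∩ K)` is the
sub-kernel associated with `K`. -/
noncomputable def staySeq {E : Type*} [MeasurableSpace E] (P : Kernel E E) (K : Set E) :
    ℕ → E → ℝ
  | 0 => fun _ => 1
  | n + 1 => fun x => ∫ y in K, staySeq P K n y ∂(P x)

lemma integrable_of_abs_bdd {E : Type*} [MeasurableSpace E] {f : E → ℝ}
    (hf : Measurable f) (C : ℝ) (hC : ∀ x, |f x| ≤ C) (μ : Measure E) [IsFiniteMeasure μ] :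
    Integrable f μ :=
  (integrable_const C).mono' hf.aestronglyMeasurable
    (Filter.Eventually.of_forall fun x => by simpa using hC x)

lemma staySeq_measurable {E : Type*} [MeasurableSpace E] (P : Kernel E E) [IsMarkovKernel P]
    (K : Set E) (hK : MeasurableSet K) (n : ℕ) : Measurable (staySeq P K n) := by
  induction n with
  | zero => simpa [staySeq] using measurable_const
  | succ n ih =>
    have heq : staySeq P K (n + 1)
        = fun x => ∫ y, K.indicator (staySeq P K n) y ∂(P x) := by
      funext x
      simp [staySeq, integral_indicator hK]
    rw [heq]
    have : StronglyMeasurable (Function.uncurry fun (_ : E) y => K.indicator (staySeq P K n) y) :=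
      ((ih.indicator hK).comp measurable_snd).stronglyMeasurable
    exact this.integral_kernel_prod_right.measurable

lemma staySeq_nonneg {E : Type*} [MeasurableSpace E] (P : Kernel E E)
    (K : Set E) (n : ℕ) (x : E) : 0 ≤ staySeq P K n x := by
  induction n generalizing x with
  | zero => simp [staySeq]
  | succ n ih =>
    simp only [staySeq]
    exact integral_nonneg fun y => ih y

lemma staySeq_le_one {E : Type*} [MeasurableSpace E] (P : Kernel E E) [IsMarkovKernel P]
    (K : Set E) (hK : MeasurableSet K) (n : ℕ) (x : E) : staySeq P K n x ≤ 1 := by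
  induction n generalizing x with
  | zero => simp [staySeq]
  | succ n ih =>
    simp only [staySeq]
    calc ∫ y in K, staySeq P K n y ∂(P x) ≤ ∫ _y in K, (1 : ℝ) ∂(P x) := by
          refine setIntegral_mono_on ?_ (integrable_const 1).integrableOn hK fun y _ => ih y
          exact (integrable_of_abs_bdd (staySeq_measurable P K hK n) 1
            (fun y => abs_le.2 ⟨by linarith [staySeq_nonneg P K n y], ih y⟩) _).integrableOn
      _ = (P x K).toReal := by simp; rfl
      _ ≤ 1 := by
          have := prob_le_one (μ := P x) (s := K)
          exact ENNReal.toReal_le_of_le_ofReal zero_le_one (by simpa using this)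

/-- If `g ≥ 0` everywhere, `g ≥ k` on `K`, the chain can stay in `K` with geometric
probability at least `αⁿ` (i.e. for every `n ≥ 1` some `x ∈ K` has `S_{n-1}(x) ≥ αⁿ`), and
`(w, lam)` is a bounded MPE solution for `g`, then `lam ≥ k + log α`. -/
theorem mpe_value_lower_bound_of_geometric_stay {E : Type*} [MeasurableSpace E]
    (P : Kernel E E) [IsMarkovKernel P]
    (K : Set E) (hK : MeasurableSet K)
    (k : ℝ) (hk : 0 < k) (α : ℝ) (hα : α ∈ Set.Ioo (0 : ℝ) 1)
    (g : E → ℝ) (hg_meas : Measurable g) (Cg : ℝ) (hg_bdd : ∀ x, |g x| ≤ Cg)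
    (hg_nonneg : ∀ x, 0 ≤ g x) (hgK : ∀ x ∈ K, k ≤ g x)
    (hstay : ∀ n : ℕ, 1 ≤ n → ∃ x ∈ K, α ^ n ≤ staySeq P K (n - 1) x)
    (w : E → ℝ) (hw_meas : Measurable w) (Cw : ℝ) (hw_bdd : ∀ x, |w x| ≤ Cw)
    (lam : ℝ)
    (hMPE : ∀ x, w x = g x - lam + Real.log (∫ y, Real.exp (w y) ∂(P x))) :
    k + Real.log α ≤ lam := by
  have hw_lb : ∀ x, -Cw ≤ w x := fun x => (abs_le.1 (hw_bdd x)).1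
  have hw_ub : ∀ x, w x ≤ Cw := fun x => (abs_le.1 (hw_bdd x)).2
  have hint : ∀ x : E, Integrable (fun y => Real.exp (w y)) (P x) := fun x =>
    integrable_of_abs_bdd (hw_meas.exp) (Real.exp Cw)
      (fun y => by
        rw [abs_of_nonneg (Real.exp_nonneg _)]
        exact Real.exp_le_exp.2 (hw_ub y)) _
  have hIpos : ∀ x : E, 0 < ∫ y, Real.exp (w y) ∂(P x) := by
    intro x
    have h1 : (Real.exp (-Cw)) ≤ ∫ y, Real.exp (w y) ∂(P x) := by
      have := integral_mono (μ := P x) (integrable_const (Real.exp (-Cw))) (hint x)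
        (fun y => Real.exp_le_exp.2 (hw_lb y))
      simpa using this
    linarith [Real.exp_pos (-Cw)]
  have hexp : ∀ x, Real.exp (w x)
      = Real.exp (g x - lam) * ∫ y, Real.exp (w y) ∂(P x) := by
    intro x
    rw [hMPE x, Real.exp_add, Real.exp_log (hIpos x)]
  -- main induction
  have key : ∀ n : ℕ, ∀ x ∈ K,
      Real.exp ((n + 1) * (k - lam) - Cw) * staySeq P K n x ≤ Real.exp (w x) := by
    intro n
    induction n with
    | zero =>
      intro x hx
      rw [hexp x]
      have h1 : Real.exp (-Cw) ≤ ∫ y, Real.exp (w y) ∂(P x) := by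
        have := integral_mono (μ := P x) (integrable_const (Real.exp (-Cw))) (hint x)
          (fun y => Real.exp_le_exp.2 (hw_lb y))
        simpa using this
      have h2 : Real.exp (k - lam) ≤ Real.exp (g x - lam) :=
        Real.exp_le_exp.2 (by linarith [hgK x hx])
      calc Real.exp ((↑(0:ℕ) + 1) * (k - lam) - Cw) * staySeq P K 0 x
          = Real.exp (k - lam) * Real.exp (-Cw) := by
            rw [← Real.exp_add]
            simp only [staySeq, mul_one, Nat.cast_zero]
            ring_nf
        _ ≤ Real.exp (g x - lam) * ∫ y, Real.exp (w y) ∂(P x) := by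
            apply mul_le_mul h2 h1 (Real.exp_nonneg _) (Real.exp_nonneg _)
    | succ n ih =>
      intro x hx
      set c : ℝ := Real.exp ((n + 1) * (k - lam) - Cw) with hc
      have hc_pos : 0 < c := Real.exp_pos _
      have hstep1 : ∫ y in K, c * staySeq P K n y ∂(P x)
          ≤ ∫ y in K, Real.exp (w y) ∂(P x) := by
        refine setIntegral_mono_on ?_ (hint x).integrableOn hK fun y hy => ih y hy
        exact ((integrable_of_abs_bdd (staySeq_measurable P K hK n) 1
          (fun y => abs_le.2 ⟨by linarith [staySeq_nonneg P K n y],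
            staySeq_le_one P K hK n y⟩) (P x)).const_mul c).integrableOn
      have hstep2 : ∫ y in K, Real.exp (w y) ∂(P x) ≤ ∫ y, Real.exp (w y) ∂(P x) :=
        setIntegral_le_integral (hint x)
          (Filter.Eventually.of_forall fun y => Real.exp_nonneg _)
      have hconst : ∫ y in K, c * staySeq P K n y ∂(P x) = c * staySeq P K (n + 1) x := by
        rw [integral_const_mul]; rfl
      have h2 : Real.exp (k - lam) ≤ Real.exp (g x - lam) :=
        Real.exp_le_exp.2 (by linarith [hgK x hx])
      have hIK : c * staySeq P K (n + 1) x ≤ ∫ y, Real.exp (w y) ∂(P x) := by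
        rw [← hconst]; exact le_trans hstep1 hstep2
      have hmain : Real.exp (k - lam) * (c * staySeq P K (n + 1) x)
          ≤ Real.exp (g x - lam) * ∫ y, Real.exp (w y) ∂(P x) := by
        apply mul_le_mul h2 hIK
          (mul_nonneg hc_pos.le (staySeq_nonneg P K (n + 1) x)) (Real.exp_nonneg _)
      rw [hexp x]
      calc Real.exp ((↑(n + 1) + 1) * (k - lam) - Cw) * staySeq P K (n + 1) x
          = Real.exp (k - lam) * (c * staySeq P K (n + 1) x) := by
            rw [hc, ← mul_assoc, ← Real.exp_add]
            congr 2
            push_cast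
            ring
        _ ≤ _ := hmain
  -- conclude
  by_contra hcon
  push_neg at hcon
  set ε : ℝ := k + Real.log α - lam with hε_def
  have hε : 0 < ε := by simp [hε_def]; linarith
  have hub : ∀ n : ℕ, (n + 1 : ℝ) * ε ≤ 2 * Cw := by
    intro n
    obtain ⟨x, hxK, hxS⟩ := hstay (n + 1) (by omega)
    simp only [Nat.add_sub_cancel] at hxS
    have h1 := key n x hxK
    have h2 : Real.exp ((n + 1) * (k - lam) - Cw) * α ^ (n + 1) ≤ Real.exp (w x) := by
      refine le_trans ?_ h1
      exact mul_le_mul_of_nonneg_left hxS (Real.exp_pos _).le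
    have h3 : Real.exp (w x) ≤ Real.exp Cw := Real.exp_le_exp.2 (hw_ub x)
    have hαpow : α ^ (n + 1) = Real.exp (((n:ℝ) + 1) * Real.log α) := by
      rw [show ((n:ℝ) + 1) = ((n + 1 : ℕ) : ℝ) by push_cast; ring, Real.exp_nat_mul,
        Real.exp_log hα.1]
    rw [hαpow, ← Real.exp_add] at h2
    have h4 : (n + 1 : ℝ) * (k - lam) - Cw + (n + 1) * Real.log α ≤ Cw :=
      Real.exp_le_exp.1 (le_trans h2 h3)
    have : (n + 1 : ℝ) * ε = (n + 1) * (k - lam) + (n + 1) * Real.log α := by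
      rw [hε_def]; ring
    linarith
  obtain ⟨n, hn⟩ := exists_nat_gt (2 * Cw / ε)
  have h5 := hub n
  have h6 : 2 * Cw / ε < (n + 1 : ℝ) := by linarith
  rw [div_lt_iff₀ hε] at h6
  linarith
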